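/- arXiv:quant-ph/0601131 — 4 statements merged into one kernel-verified Lean document; each statement's English description precedes it below -/
import Mathlib

section
/- The reachable sets of the adjoint system are Ad_K-invariant: for every k ∈ K and every t ≥ 0, one has k·R₂(1,t)·k⁻¹ = R₂(1,t) and k·closure(R₂(1,t))·k⁻¹ = closure(R₂(1,t)). -/
open Matrix MeasureTheory
open scoped Pointwise

noncomputable section

attribute [local instance] Matrix.normedAddCommGroup Matrix.normedSpace

/-- A trajectory, on the time interval `[0, T]`, of the unreduced system (system 1)
`U̇ = (H_d + Σⱼ vⱼ(s) Hⱼ)·U`, for some bounded measurable control `v : [0,T] → ℝ^m`,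
in integrated form. -/
def IsTrajectoryUnreduced {N m : ℕ} (Hd : Matrix (Fin N) (Fin N) ℂ)
    (H : Fin m → Matrix (Fin N) (Fin N) ℂ) (T : ℝ)
    (U : ℝ → Matrix (Fin N) (Fin N) ℂ) : Prop :=
  ∃ v : ℝ → Fin m → ℝ, Measurable v ∧ (∃ Cb : ℝ, ∀ s ∈ Set.Icc 0 T, ‖v s‖ ≤ Cb) ∧
    ContinuousOn U (Set.Icc 0 T) ∧
    ∀ t ∈ Set.Icc 0 T,
      U t = U 0 + ∫ s in (0:ℝ)..t, (Hd + ∑ j, v s j • H j) * U s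

/-- The reachable set `R₁(x,t)`: all values `U(s)`, `0 ≤ s ≤ t`, of trajectories of the
unreduced system with `U(0) = x`. -/
def reach1 {N m : ℕ} (Hd : Matrix (Fin N) (Fin N) ℂ)
    (H : Fin m → Matrix (Fin N) (Fin N) ℂ) (x : Matrix (Fin N) (Fin N) ℂ) (t : ℝ) :
    Set (Matrix (Fin N) (Fin N) ℂ) :=
  {y | ∃ T U s, IsTrajectoryUnreduced Hd H T U ∧ U 0 = x ∧
    0 ≤ s ∧ s ≤ t ∧ s ≤ T ∧ y = U s}

/-- The adjoint orbit `Ad_K H_d = { k H_d k⁻¹ : k ∈ K }`. -/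
def adOrbit {N : ℕ} (K : Set (Matrix (Fin N) (Fin N) ℂ)) (Hd : Matrix (Fin N) (Fin N) ℂ) :
    Set (Matrix (Fin N) (Fin N) ℂ) :=
  {Y | ∃ k ∈ K, Y = k * Hd * k⁻¹}

/-- A trajectory, on the time interval `[0, T]`, of the adjoint system (system 2)
`Ṗ = X·P` with measurable control `X : [0,T] → Ad_K H_d`, in integrated form. -/
def IsTrajectoryAdjoint {N : ℕ} (K : Set (Matrix (Fin N) (Fin N) ℂ))
    (Hd : Matrix (Fin N) (Fin N) ℂ) (T : ℝ) (P : ℝ → Matrix (Fin N) (Fin N) ℂ) : Prop :=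
  ∃ X : ℝ → Matrix (Fin N) (Fin N) ℂ,
    (∀ i j, Measurable fun s => X s i j) ∧
    (∀ s ∈ Set.Icc 0 T, X s ∈ adOrbit K Hd) ∧
    ContinuousOn P (Set.Icc 0 T) ∧
    ∀ t ∈ Set.Icc 0 T, P t = P 0 + ∫ s in (0:ℝ)..t, X s * P s

/-- The reachable set `R₂(x,t)` of the adjoint system. -/
def reach2 {N : ℕ} (K : Set (Matrix (Fin N) (Fin N) ℂ)) (Hd : Matrix (Fin N) (Fin N) ℂ)
    (x : Matrix (Fin N) (Fin N) ℂ) (t : ℝ) : Set (Matrix (Fin N) (Fin N) ℂ) :=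
  {y | ∃ T P s, IsTrajectoryAdjoint K Hd T P ∧ P 0 = x ∧
    0 ≤ s ∧ s ≤ t ∧ s ≤ T ∧ y = P s}

/-- The approximately reachable set `S₁(x,t) = ∩_{s>t} closure (R₁(x,s))`. -/
def approxReach1 {N m : ℕ} (Hd : Matrix (Fin N) (Fin N) ℂ)
    (H : Fin m → Matrix (Fin N) (Fin N) ℂ) (x : Matrix (Fin N) (Fin N) ℂ) (t : ℝ) :
    Set (Matrix (Fin N) (Fin N) ℂ) :=
  ⋂ s ∈ Set.Ioi t, closure (reach1 Hd H x s)


/-- Conjugation by an invertible matrix as a continuous linear equivalence. -/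
def conjCLE {N : ℕ} (k : Matrix (Fin N) (Fin N) ℂ)
    (h1 : k * k⁻¹ = 1) (h2 : k⁻¹ * k = 1) :
    Matrix (Fin N) (Fin N) ℂ ≃L[ℂ] Matrix (Fin N) (Fin N) ℂ where
  toFun y := k * y * k⁻¹
  invFun y := k⁻¹ * y * k
  map_add' x y := by show k * (x + y) * k⁻¹ = k * x * k⁻¹ + k * y * k⁻¹; rw [mul_add, add_mul]
  map_smul' c y := by simp [Matrix.mul_smul, Matrix.smul_mul]
  left_inv y := by
    show k⁻¹ * (k * y * k⁻¹) * k = y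
    rw [show k⁻¹ * (k * y * k⁻¹) * k = k⁻¹ * k * y * (k⁻¹ * k) by noncomm_ring, h2,
      one_mul, mul_one]
  right_inv y := by
    show k * (k⁻¹ * y * k) * k⁻¹ = y
    rw [show k * (k⁻¹ * y * k) * k⁻¹ = k * k⁻¹ * y * (k * k⁻¹) by noncomm_ring, h1,
      one_mul, mul_one]
  continuous_toFun := (continuous_const.matrix_mul continuous_id).matrix_mul continuous_const
  continuous_invFun := (continuous_const.matrix_mul continuous_id).matrix_mul continuous_const

/-- Conjugation commutes with interval integrals. -/
lemma conj_intervalIntegral {N : ℕ} (k : Matrix (Fin N) (Fin N) ℂ)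
    (h1 : k * k⁻¹ = 1) (h2 : k⁻¹ * k = 1) (f : ℝ → Matrix (Fin N) (Fin N) ℂ) (a b : ℝ) :
    (∫ s in a..b, k * f s * k⁻¹) = k * (∫ s in a..b, f s) * k⁻¹ := by
  have hL : ∀ c d : ℝ, (∫ s in Set.Ioc c d, (conjCLE k h1 h2) (f s)) =
      (conjCLE k h1 h2) (∫ s in Set.Ioc c d, f s) :=
    fun c d => ContinuousLinearEquiv.integral_comp_comm _ _
  simp only [intervalIntegral]
  have he : ∀ s, k * f s * k⁻¹ = (conjCLE k h1 h2) (f s) := fun s => rfl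
  simp only [he, hL]
  exact (map_sub (conjCLE k h1 h2) _ _).symm

/-- Conjugation by an element of `K` maps `reach2 K Hd 1 t` into itself. -/
lemma conj_reach2_subset {N : ℕ} (K : Set (Matrix (Fin N) (Fin N) ℂ))
    (Hd : Matrix (Fin N) (Fin N) ℂ)
    (hKU : K ⊆ (Matrix.unitaryGroup (Fin N) ℂ : Set (Matrix (Fin N) (Fin N) ℂ)))
    (hKmul : ∀ a ∈ K, ∀ b ∈ K, a * b ∈ K)
    (k : Matrix (Fin N) (Fin N) ℂ) (hk : k ∈ K) (t : ℝ) :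
    (fun y => k * y * k⁻¹) '' reach2 K Hd 1 t ⊆ reach2 K Hd 1 t := by
  have hkU : k ∈ Matrix.unitaryGroup (Fin N) ℂ := hKU hk
  have hsk : k * star k = 1 := (Matrix.mem_unitaryGroup_iff).mp hkU
  have hsk' : star k * k = 1 := (Matrix.mem_unitaryGroup_iff').mp hkU
  have hinv : k⁻¹ = star k := Matrix.inv_eq_right_inv hsk
  have h1 : k * k⁻¹ = 1 := by rw [hinv]; exact hsk
  have h2 : k⁻¹ * k = 1 := by rw [hinv]; exact hsk'
  rintro _ ⟨y, ⟨T, P, s, ⟨X, hXm, hXK, hPc, hPeq⟩, hP0, hs0, hst, hsT, rfl⟩, rfl⟩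
  refine ⟨T, fun u => k * P u * k⁻¹, s,
    ⟨fun u => k * X u * k⁻¹, ?_, ?_, ?_, ?_⟩, ?_, hs0, hst, hsT, rfl⟩
  · intro i j
    have heq : (fun u => (k * X u * k⁻¹) i j)
        = fun u => ∑ q, (∑ p, k i p * X u p q) * k⁻¹ q j := by
      funext u; simp [Matrix.mul_apply]
    rw [heq]
    exact Finset.measurable_sum _ fun q _ =>
      (Finset.measurable_sum _ fun p _ => (hXm p q).const_mul _).mul_const _
  · intro u hu
    obtain ⟨g, hg, hgeq⟩ := hXK u hu
    refine ⟨k * g, hKmul _ hk _ hg, ?_⟩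
    show k * X u * k⁻¹ = k * g * Hd * (k * g)⁻¹
    rw [hgeq, Matrix.mul_inv_rev]
    noncomm_ring
  · exact ((conjCLE k h1 h2).continuous.comp_continuousOn hPc : _)
  · intro u hu
    have heq := hPeq u hu
    show k * P u * k⁻¹ = k * P 0 * k⁻¹ +
      ∫ v in (0:ℝ)..u, (k * X v * k⁻¹) * (k * P v * k⁻¹)
    have hintg : ∀ v : ℝ, (k * X v * k⁻¹) * (k * P v * k⁻¹) = k * (X v * P v) * k⁻¹ := by
      intro v
      rw [show (k * X v * k⁻¹) * (k * P v * k⁻¹) = k * X v * (k⁻¹ * k) * P v * k⁻¹ by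
        noncomm_ring, h2, mul_one]
      noncomm_ring
    simp only [hintg]
    rw [conj_intervalIntegral k h1 h2, heq, mul_add, add_mul]
  · show k * P 0 * k⁻¹ = 1
    rw [hP0, mul_one, h1]

/-- **`Ad_K`-invariance of the reachable sets of the adjoint system.**
For every `k ∈ K` and every `t ≥ 0`, `k·R₂(1,t)·k⁻¹ = R₂(1,t)` and
`k·closure(R₂(1,t))·k⁻¹ = closure(R₂(1,t))`. -/
theorem reach2_adK_invariant {N m : ℕ} (hN : 1 ≤ N) (hm : 1 ≤ m)
    (Hd : Matrix (Fin N) (Fin N) ℂ) (hHd : Hdᴴ = -Hd)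
    (H : Fin m → Matrix (Fin N) (Fin N) ℂ) (hH : ∀ j, (H j)ᴴ = -H j)
    (K : Set (Matrix (Fin N) (Fin N) ℂ))
    (hKU : K ⊆ (Matrix.unitaryGroup (Fin N) ℂ : Set (Matrix (Fin N) (Fin N) ℂ)))
    (hK1 : (1 : Matrix (Fin N) (Fin N) ℂ) ∈ K)
    (hKmul : ∀ a ∈ K, ∀ b ∈ K, a * b ∈ K)
    (hKinv : ∀ k ∈ K, k⁻¹ ∈ K)
    (hKcomp : IsCompact K)
    (hKgen : K = closure (Submonoid.closure
      {g : Matrix (Fin N) (Fin N) ℂ |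
        ∃ v : Fin m → ℝ, g = NormedSpace.exp (∑ j, v j • H j)} :
          Set (Matrix (Fin N) (Fin N) ℂ)))
    (k : Matrix (Fin N) (Fin N) ℂ) (hk : k ∈ K) (t : ℝ) (ht : 0 ≤ t) :
    (fun y => k * y * k⁻¹) '' reach2 K Hd 1 t = reach2 K Hd 1 t ∧
      (fun y => k * y * k⁻¹) '' closure (reach2 K Hd 1 t) = closure (reach2 K Hd 1 t) := by
  have hkinv : k⁻¹ ∈ K := hKinv k hk
  have hkU : k ∈ Matrix.unitaryGroup (Fin N) ℂ := hKU hk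
  have hsk : k * star k = 1 := (Matrix.mem_unitaryGroup_iff).mp hkU
  have hsk' : star k * k = 1 := (Matrix.mem_unitaryGroup_iff').mp hkU
  have hinv : k⁻¹ = star k := Matrix.inv_eq_right_inv hsk
  have h1 : k * k⁻¹ = 1 := by rw [hinv]; exact hsk
  have h2 : k⁻¹ * k = 1 := by rw [hinv]; exact hsk'
  have hii : k⁻¹⁻¹ = k := Matrix.inv_eq_right_inv h2
  have himg : (fun y => k * y * k⁻¹) '' reach2 K Hd 1 t = reach2 K Hd 1 t := by
    apply Set.Subset.antisymm (conj_reach2_subset K Hd hKU hKmul k hk t)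
    intro y hy
    refine ⟨k⁻¹ * y * k, ?_, ?_⟩
    · have : k⁻¹ * y * k = k⁻¹ * y * k⁻¹⁻¹ := by rw [hii]
      rw [this]
      exact conj_reach2_subset K Hd hKU hKmul k⁻¹ hkinv t ⟨y, hy, rfl⟩
    · show k * (k⁻¹ * y * k) * k⁻¹ = y
      rw [show k * (k⁻¹ * y * k) * k⁻¹ = k * k⁻¹ * y * (k * k⁻¹) by noncomm_ring, h1,
        one_mul, mul_one]
  refine ⟨himg, ?_⟩
  have hhom : (fun y => k * y * k⁻¹) '' closure (reach2 K Hd 1 t)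
      = closure ((fun y => k * y * k⁻¹) '' reach2 K Hd 1 t) := by
    have := (conjCLE k h1 h2).toHomeomorph.image_closure (reach2 K Hd 1 t)
    exact this
  rw [hhom, himg]
end
end

section
/- For every x ∈ M_N(ℂ) and every t ≥ 0, the set closure(R₂(x,t)) is compact, and closure(R₂(x,t)) = ∩_{n≥1} closure(R₂(x, t + 1/n)). -/
open Matrix MeasureTheory
open scoped Pointwise

noncomputable section

attribute [local instance] Matrix.normedAddCommGroup Matrix.normedSpace

section AuxLemmas

variable {N : ℕ}

local instance : MeasurableSpace (Matrix (Fin N) (Fin N) ℂ) :=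
  inferInstanceAs (MeasurableSpace (Fin N → Fin N → ℂ))
local instance : BorelSpace (Matrix (Fin N) (Fin N) ℂ) :=
  inferInstanceAs (BorelSpace (Fin N → Fin N → ℂ))
local instance : TopologicalSpace.PseudoMetrizableSpace (Matrix (Fin N) (Fin N) ℂ) :=
  inferInstanceAs (TopologicalSpace.PseudoMetrizableSpace (Fin N → Fin N → ℂ))
local instance : SecondCountableTopology (Matrix (Fin N) (Fin N) ℂ) :=
  inferInstanceAs (SecondCountableTopology (Fin N → Fin N → ℂ))
local instance : ENormedAddCommMonoid (Matrix (Fin N) (Fin N) ℂ) :=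
  inferInstanceAs (ENormedAddCommMonoid (Fin N → Fin N → ℂ))

lemma mat_norm_mul_le (A B : Matrix (Fin N) (Fin N) ℂ) :
    ‖A * B‖ ≤ N * ‖A‖ * ‖B‖ := by
  have h0 : (0:ℝ) ≤ N * ‖A‖ * ‖B‖ := by positivity
  rw [Matrix.norm_le_iff h0]
  intro i j
  rw [Matrix.mul_apply]
  calc ‖∑ k, A i k * B k j‖ ≤ ∑ k, ‖A i k * B k j‖ := norm_sum_le _ _
    _ ≤ ∑ _k : Fin N, ‖A‖ * ‖B‖ := by
        refine Finset.sum_le_sum fun k _ => ?_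
        rw [norm_mul]
        exact mul_le_mul (Matrix.norm_entry_le_entrywise_sup_norm A)
          (Matrix.norm_entry_le_entrywise_sup_norm B) (norm_nonneg _) (norm_nonneg _)
    _ = N * ‖A‖ * ‖B‖ := by simp [Finset.sum_const, mul_assoc]

lemma unitary_norm_le {k : Matrix (Fin N) (Fin N) ℂ}
    (hk : k ∈ Matrix.unitaryGroup (Fin N) ℂ) : ‖k‖ ≤ 1 := by
  rw [Matrix.norm_le_iff zero_le_one]
  intro i j; exact entry_norm_bound_of_unitary hk i j

lemma unitary_inv_norm_le {k : Matrix (Fin N) (Fin N) ℂ}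
    (hk : k ∈ Matrix.unitaryGroup (Fin N) ℂ) : ‖k⁻¹‖ ≤ 1 := by
  have h1 : k⁻¹ = kᴴ := by
    refine Matrix.inv_eq_left_inv ?_
    have := hk.1
    simpa [Matrix.star_eq_conjTranspose] using this
  rw [h1, Matrix.norm_le_iff zero_le_one]
  intro i j
  rw [Matrix.conjTranspose_apply]
  simpa using entry_norm_bound_of_unitary hk j i

lemma traj_key {T M : ℝ} (hM : 0 ≤ M) (hT : 0 ≤ T) {X P : ℝ → Matrix (Fin N) (Fin N) ℂ}
    (hXm : ∀ i j, Measurable fun s => X s i j)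
    (hXb : ∀ s ∈ Set.Icc 0 T, ‖X s‖ ≤ M)
    (hPc : ContinuousOn P (Set.Icc 0 T))
    (heq : ∀ u ∈ Set.Icc 0 T, P u = P 0 + ∫ s in (0:ℝ)..u, X s * P s) :
    (∀ u ∈ Set.Icc 0 T, ‖P u‖ ≤ ‖P 0‖ * Real.exp (N * M * u)) ∧
    (∀ a ∈ Set.Icc 0 T, ∀ b ∈ Set.Icc 0 T, a ≤ b →
      ‖P b - P a‖ ≤ (N * M * (‖P 0‖ * Real.exp (N * M * b))) * (b - a)) := by
  have hXmeas : Measurable X :=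
    measurable_pi_lambda _ fun i => measurable_pi_lambda _ fun j => hXm i j
  set G : ℝ → Matrix (Fin N) (Fin N) ℂ := fun s => X s * P s with hG
  obtain ⟨B0, hB0⟩ := (isCompact_Icc (a := (0:ℝ)) (b := T)).exists_bound_of_continuousOn hPc
  set B : ℝ := max B0 0 with hBdef
  have hB : ∀ s ∈ Set.Icc (0:ℝ) T, ‖P s‖ ≤ B := fun s hs => (hB0 s hs).trans (le_max_left _ _)
  have hBnn : (0:ℝ) ≤ B := le_max_right _ _
  have hNnn : (0:ℝ) ≤ (N:ℝ) := Nat.cast_nonneg _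
  have hPae : AEStronglyMeasurable P (volume.restrict (Set.Icc 0 T)) :=
    hPc.aestronglyMeasurable measurableSet_Icc
  have hXae : AEStronglyMeasurable X (volume.restrict (Set.Icc 0 T)) :=
    hXmeas.aestronglyMeasurable
  have hGae : AEStronglyMeasurable G (volume.restrict (Set.Icc 0 T)) := by
    have hcont : Continuous fun p : (Matrix (Fin N) (Fin N) ℂ) × (Matrix (Fin N) (Fin N) ℂ) =>
        p.1 * p.2 := Continuous.matrix_mul continuous_fst continuous_snd
    exact hcont.comp_aestronglyMeasurable (hXae.prodMk hPae)
  have hGbd : ∀ s ∈ Set.Icc (0:ℝ) T, ‖G s‖ ≤ (N:ℝ) * M * B := by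
    intro s hs
    calc ‖G s‖ ≤ N * ‖X s‖ * ‖P s‖ := mat_norm_mul_le _ _
      _ = N * (‖X s‖ * ‖P s‖) := by ring
      _ ≤ N * (M * B) := mul_le_mul_of_nonneg_left
          (mul_le_mul (hXb s hs) (hB s hs) (norm_nonneg _) hM) hNnn
      _ = N * M * B := by ring
  have hGint : ∀ a b : ℝ, 0 ≤ a → b ≤ T → a ≤ b → IntervalIntegrable G volume a b := by
    intro a b ha hb hab
    rw [intervalIntegrable_iff_integrableOn_Ioc_of_le hab]
    have hsub : Set.Ioc a b ⊆ Set.Icc 0 T := fun s hs => ⟨ha.trans hs.1.le, hs.2.trans hb⟩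
    refine Integrable.mono' (g := fun _ => (N:ℝ) * M * B)
      (integrableOn_const measure_Ioc_lt_top.ne)
      (hGae.mono_measure (Measure.restrict_mono hsub le_rfl)) ?_
    exact (ae_restrict_iff' measurableSet_Ioc).2 (ae_of_all _ fun s hs => hGbd s (hsub hs))
  set Q : ℝ → Matrix (Fin N) (Fin N) ℂ := fun u => P (max 0 (min u T)) with hQdef
  have hmem : ∀ u : ℝ, max 0 (min u T) ∈ Set.Icc (0:ℝ) T := fun u =>
    ⟨le_max_left _ _, max_le hT (min_le_right _ _)⟩
  have hQc : Continuous Q :=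
    hPc.comp_continuous (continuous_const.max (continuous_id.min continuous_const)) hmem
  have hQP : ∀ u ∈ Set.Icc (0:ℝ) T, Q u = P u := by
    intro u hu
    simp only [hQdef, min_eq_left hu.2, max_eq_right hu.1]
  set g : ℝ → ℝ := fun s => (N:ℝ) * M * ‖Q s‖ with hgdef
  have hgc : Continuous g := continuous_const.mul hQc.norm
  set F : ℝ → ℝ := fun u => ‖P 0‖ + ∫ s in (0:ℝ)..u, g s with hFdef
  have hFderiv : ∀ u : ℝ, HasDerivAt F (g u) u := fun u =>
    (intervalIntegral.integral_hasDerivAt_right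
      (hgc.intervalIntegrable _ _) (hgc.stronglyMeasurableAtFilter _ _)
      hgc.continuousAt).const_add _
  have hFcont : Continuous F := continuous_iff_continuousAt.2 fun u => (hFderiv u).continuousAt
  have key1 : ∀ u ∈ Set.Icc (0:ℝ) T, ‖P u‖ ≤ F u := by
    intro u hu
    rw [heq u hu]
    refine (norm_add_le _ _).trans (add_le_add_right ?_ _)
    refine (intervalIntegral.norm_integral_le_integral_norm hu.1).trans ?_
    refine intervalIntegral.integral_mono_on hu.1 ((hGint 0 u le_rfl hu.2 hu.1).norm)
      (hgc.intervalIntegrable _ _) fun s hs => ?_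
    have hs' : s ∈ Set.Icc (0:ℝ) T := ⟨hs.1, hs.2.trans hu.2⟩
    calc ‖G s‖ ≤ N * ‖X s‖ * ‖P s‖ := mat_norm_mul_le _ _
      _ ≤ N * M * ‖P s‖ := mul_le_mul_of_nonneg_right
          (mul_le_mul_of_nonneg_left (hXb s hs') hNnn) (norm_nonneg _)
      _ = g s := by rw [hgdef]; simp only; rw [hQP s hs']
  have grw : ∀ u ∈ Set.Icc (0:ℝ) T, ‖F u‖ ≤ ‖P 0‖ * Real.exp ((N:ℝ) * M * u) := by
    intro u hu
    have hg0 := norm_le_gronwallBound_of_norm_deriv_right_le (f := F) (f' := g)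
      (δ := ‖P 0‖) (K := (N:ℝ) * M) (ε := 0) (a := 0) (b := T)
      hFcont.continuousOn (fun s _ => (hFderiv s).hasDerivWithinAt)
      (by simp [hFdef]) ?_ u hu
    · rwa [sub_zero, gronwallBound_ε0] at hg0
    · intro s hs
      have hsI : s ∈ Set.Icc (0:ℝ) T := ⟨hs.1, hs.2.le⟩
      have h2 : g s ≤ (N:ℝ) * M * F s := by
        rw [hgdef]; simp only; rw [hQP s hsI]
        have hk := key1 s hsI
        have : (0:ℝ) ≤ (N:ℝ) * M := mul_nonneg hNnn hM
        exact mul_le_mul_of_nonneg_left hk this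
      have h3 : (0:ℝ) ≤ g s := by rw [hgdef]; positivity
      rw [Real.norm_eq_abs, abs_of_nonneg h3, add_zero]
      refine h2.trans ?_
      have h5 : F s ≤ |F s| := le_abs_self _
      rw [Real.norm_eq_abs]
      exact mul_le_mul_of_nonneg_left h5 (mul_nonneg hNnn hM)
  have part1 : ∀ u ∈ Set.Icc (0:ℝ) T, ‖P u‖ ≤ ‖P 0‖ * Real.exp (N * M * u) := fun u hu =>
    (key1 u hu).trans ((le_abs_self _).trans (grw u hu))
  refine ⟨part1, ?_⟩
  intro a ha b hb hab
  have hsplit : P b - P a = ∫ s in a..b, G s := by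
    rw [heq b hb, heq a ha]
    rw [add_sub_add_left_eq_sub]
    exact intervalIntegral.integral_interval_sub_left (hGint 0 b le_rfl hb.2 hb.1)
      (hGint 0 a le_rfl ha.2 ha.1)
  rw [hsplit]
  have hbound : ∀ s ∈ Set.uIoc a b, ‖G s‖ ≤ (N:ℝ) * M * (‖P 0‖ * Real.exp (N * M * b)) := by
    intro s hs
    rw [Set.uIoc_of_le hab] at hs
    have hs' : s ∈ Set.Icc (0:ℝ) T := ⟨ha.1.trans hs.1.le, hs.2.trans hb.2⟩
    calc ‖G s‖ ≤ N * ‖X s‖ * ‖P s‖ := mat_norm_mul_le _ _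
      _ ≤ N * M * ‖P s‖ := mul_le_mul_of_nonneg_right
          (mul_le_mul_of_nonneg_left (hXb s hs') hNnn) (norm_nonneg _)
      _ ≤ (N:ℝ) * M * (‖P 0‖ * Real.exp (N * M * b)) := by
          have h6 := part1 s hs'
          have h7 : Real.exp ((N:ℝ) * M * s) ≤ Real.exp ((N:ℝ) * M * b) :=
            Real.exp_le_exp.2 (mul_le_mul_of_nonneg_left hs.2 (mul_nonneg hNnn hM))
          refine mul_le_mul_of_nonneg_left (h6.trans ?_) (mul_nonneg hNnn hM)
          exact mul_le_mul_of_nonneg_left h7 (norm_nonneg _)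
  have := intervalIntegral.norm_integral_le_of_norm_le_const hbound
  rwa [abs_of_nonneg (sub_nonneg.2 hab)] at this


lemma adOrbit_norm_le {K : Set (Matrix (Fin N) (Fin N) ℂ)}
    (hKU : K ⊆ (Matrix.unitaryGroup (Fin N) ℂ : Set (Matrix (Fin N) (Fin N) ℂ)))
    (Hd : Matrix (Fin N) (Fin N) ℂ) {Y : Matrix (Fin N) (Fin N) ℂ}
    (hY : Y ∈ adOrbit K Hd) : ‖Y‖ ≤ N * N * ‖Hd‖ := by
  obtain ⟨k, hk, rfl⟩ := hY
  have h1 : ‖k‖ ≤ 1 := unitary_norm_le (hKU hk)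
  have h2 : ‖k⁻¹‖ ≤ 1 := unitary_inv_norm_le (hKU hk)
  have hNnn : (0:ℝ) ≤ (N:ℝ) := Nat.cast_nonneg _
  calc ‖k * Hd * k⁻¹‖ ≤ N * ‖k * Hd‖ * ‖k⁻¹‖ := mat_norm_mul_le _ _
    _ ≤ N * ((N:ℝ) * ‖k‖ * ‖Hd‖) * ‖k⁻¹‖ := mul_le_mul_of_nonneg_right
        (mul_le_mul_of_nonneg_left (mat_norm_mul_le _ _) hNnn) (norm_nonneg _)
    _ ≤ N * ((N:ℝ) * 1 * ‖Hd‖) * 1 := by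
        have h3 : (N:ℝ) * ‖k‖ * ‖Hd‖ ≤ (N:ℝ) * 1 * ‖Hd‖ := mul_le_mul_of_nonneg_right
          (mul_le_mul_of_nonneg_left h1 hNnn) (norm_nonneg _)
        have h4 : (0:ℝ) ≤ (N:ℝ) * ((N:ℝ) * 1 * ‖Hd‖) := by positivity
        calc (N:ℝ) * ((N:ℝ) * ‖k‖ * ‖Hd‖) * ‖k⁻¹‖
            ≤ (N:ℝ) * ((N:ℝ) * 1 * ‖Hd‖) * ‖k⁻¹‖ := mul_le_mul_of_nonneg_right
              (mul_le_mul_of_nonneg_left h3 hNnn) (norm_nonneg _)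
          _ ≤ (N:ℝ) * ((N:ℝ) * 1 * ‖Hd‖) * 1 := mul_le_mul_of_nonneg_left h2 h4
    _ = N * N * ‖Hd‖ := by ring

lemma reach2_mono {K : Set (Matrix (Fin N) (Fin N) ℂ)} {Hd x : Matrix (Fin N) (Fin N) ℂ}
    {t t' : ℝ} (h : t ≤ t') : reach2 K Hd x t ⊆ reach2 K Hd x t' := by
  rintro y ⟨T, P, s, htraj, h0, hs0, hst, hsT, rfl⟩
  exact ⟨T, P, s, htraj, h0, hs0, hst.trans h, hsT, rfl⟩

end AuxLemmas

/-- **Compactness and outer regularity of the adjoint reachable sets.**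
For every `x` and every `t ≥ 0`, `closure(R₂(x,t))` is compact and
`closure(R₂(x,t)) = ∩_{n ≥ 1} closure(R₂(x, t + 1/n))`. -/
theorem closure_reach2_compact_and_iInter {N m : ℕ} (hN : 1 ≤ N) (hm : 1 ≤ m)
    (Hd : Matrix (Fin N) (Fin N) ℂ) (hHd : Hdᴴ = -Hd)
    (H : Fin m → Matrix (Fin N) (Fin N) ℂ) (hH : ∀ j, (H j)ᴴ = -H j)
    (K : Set (Matrix (Fin N) (Fin N) ℂ))
    (hKU : K ⊆ (Matrix.unitaryGroup (Fin N) ℂ : Set (Matrix (Fin N) (Fin N) ℂ)))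
    (hK1 : (1 : Matrix (Fin N) (Fin N) ℂ) ∈ K)
    (hKmul : ∀ a ∈ K, ∀ b ∈ K, a * b ∈ K)
    (hKinv : ∀ k ∈ K, k⁻¹ ∈ K)
    (hKcomp : IsCompact K)
    (hKgen : K = closure (Submonoid.closure
      {g : Matrix (Fin N) (Fin N) ℂ |
        ∃ v : Fin m → ℝ, g = NormedSpace.exp (∑ j, v j • H j)} :
          Set (Matrix (Fin N) (Fin N) ℂ)))
    (x : Matrix (Fin N) (Fin N) ℂ) (t : ℝ) (ht : 0 ≤ t) :
    IsCompact (closure (reach2 K Hd x t)) ∧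
      closure (reach2 K Hd x t) =
        ⋂ n : ℕ, closure (reach2 K Hd x (t + 1 / (n + 1))) := by
  set M : ℝ := (N:ℝ) * (N:ℝ) * ‖Hd‖ with hMdef
  have hM : 0 ≤ M := by rw [hMdef]; positivity
  set c : ℝ := (N:ℝ) * M with hcdef
  have hc : 0 ≤ c := by rw [hcdef]; positivity
  have keybound : ∀ r : ℝ, 0 ≤ r → ∀ y ∈ reach2 K Hd x r, ‖y‖ ≤ ‖x‖ * Real.exp (c * r) := by
    rintro r hr y ⟨T, P, s, ⟨X, hXm, hXmem, hPc, heqn⟩, h0, hs0, hst, hsT, rfl⟩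
    have hT : 0 ≤ T := hs0.trans hsT
    have hXb : ∀ u ∈ Set.Icc (0:ℝ) T, ‖X u‖ ≤ M := fun u hu =>
      adOrbit_norm_le hKU Hd (hXmem u hu)
    have h1 := (traj_key hM hT hXm hXb hPc heqn).1 s ⟨hs0, hsT⟩
    rw [h0, ← hcdef] at h1
    refine h1.trans (mul_le_mul_of_nonneg_left ?_ (norm_nonneg _))
    exact Real.exp_le_exp.2 (mul_le_mul_of_nonneg_left hst hc)
  constructor
  · have hsub : closure (reach2 K Hd x t) ⊆ Metric.closedBall 0 (‖x‖ * Real.exp (c * t)) := by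
      refine closure_minimal ?_ Metric.isClosed_closedBall
      intro y hy
      rw [mem_closedBall_zero_iff]
      exact keybound t ht y hy
    exact (isCompact_closedBall _ _).of_isClosed_subset isClosed_closure hsub
  · apply Set.Subset.antisymm
    · refine Set.subset_iInter fun n => closure_mono (reach2_mono ?_)
      have h0 : (0:ℝ) < 1 / ((n:ℝ) + 1) := by positivity
      linarith
    · intro y hy
      refine Metric.mem_closure_iff.2 ?_
      intro ε hε
      set Bd : ℝ := ‖x‖ * Real.exp (c * (t + 1)) with hBd
      have hBdnn : 0 ≤ Bd := by rw [hBd]; positivity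
      obtain ⟨n, hn⟩ := exists_nat_gt (2 * c * Bd / ε)
      have hn1 : (0:ℝ) < (n:ℝ) + 1 := by positivity
      have hkey : c * Bd * (1 / ((n:ℝ) + 1)) < ε / 2 := by
        rw [div_lt_iff₀ hε] at hn
        rw [mul_one_div, div_lt_div_iff₀ hn1 two_pos]
        nlinarith
      have hy' : y ∈ closure (reach2 K Hd x (t + 1 / ((n:ℝ) + 1))) := Set.mem_iInter.1 hy n
      replace hy' := Metric.mem_closure_iff.1 hy'
      obtain ⟨z, hz, hdz⟩ := hy' (ε / 2) (by positivity)
      obtain ⟨T, P, s, htraj, h0, hs0, hst, hsT, rfl⟩ := hz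
      obtain ⟨X, hXm, hXmem, hPc, heqn⟩ := htraj
      have hT : 0 ≤ T := hs0.trans hsT
      have hXb : ∀ u ∈ Set.Icc (0:ℝ) T, ‖X u‖ ≤ M := fun u hu =>
        adOrbit_norm_le hKU Hd (hXmem u hu)
      set s' : ℝ := min s t with hs'def
      have hs'0 : 0 ≤ s' := le_min hs0 ht
      have hs'T : s' ≤ T := (min_le_left _ _).trans hsT
      have hs's : s' ≤ s := min_le_left _ _
      have hmem2 : P s' ∈ reach2 K Hd x t :=
        ⟨T, P, s', ⟨X, hXm, hXmem, hPc, heqn⟩, h0, hs'0, min_le_right _ _, hs'T, rfl⟩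
      refine ⟨P s', hmem2, ?_⟩
      have hlip := (traj_key hM hT hXm hXb hPc heqn).2 s' ⟨hs'0, hs'T⟩ s ⟨hs0, hsT⟩ hs's
      rw [h0, ← hcdef] at hlip
      have hfrac1 : 1 / ((n:ℝ) + 1) ≤ 1 := by
        rw [div_le_one hn1]
        have : (0:ℝ) ≤ (n:ℝ) := Nat.cast_nonneg _
        linarith
      have hsb : s ≤ t + 1 := hst.trans (by linarith)
      have hss : s - s' ≤ 1 / ((n:ℝ) + 1) := by
        rcases le_total s t with h | h
        · rw [hs'def, min_eq_left h, sub_self]; positivity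
        · rw [hs'def, min_eq_right h]; linarith
      have hss0 : 0 ≤ s - s' := sub_nonneg.2 hs's
      have e2 : ‖x‖ * Real.exp (c * s) ≤ Bd := by
        rw [hBd]
        exact mul_le_mul_of_nonneg_left
          (Real.exp_le_exp.2 (mul_le_mul_of_nonneg_left hsb hc)) (norm_nonneg _)
      have h2 : ‖P s - P s'‖ ≤ c * Bd * (1 / ((n:ℝ) + 1)) := by
        refine hlip.trans ?_
        calc c * (‖x‖ * Real.exp (c * s)) * (s - s')
            ≤ c * Bd * (s - s') := mul_le_mul_of_nonneg_right
              (mul_le_mul_of_nonneg_left e2 hc) hss0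
          _ ≤ c * Bd * (1 / ((n:ℝ) + 1)) :=
              mul_le_mul_of_nonneg_left hss (mul_nonneg hc hBdnn)
      have hd2 : dist (P s) (P s') < ε / 2 := by
        rw [dist_eq_norm]
        exact lt_of_le_of_lt h2 hkey
      calc dist y (P s') ≤ dist y (P s) + dist (P s) (P s') := dist_triangle _ _ _
        _ < ε / 2 + ε / 2 := add_lt_add hdz hd2
        _ = ε := by ring
end
end

section
/- The subgroup K is contained in the approximately reachable set at time zero of the unreduced system: K ⊆ S₁(1,0). Consequently, if z ∈ S₁(1,t) for some t ≥ 0, then zk ∈ S₁(1,t) for every k ∈ K. -/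
open Matrix MeasureTheory
open scoped Pointwise

noncomputable section

namespace AuxK
section Linfty
attribute [local instance] Matrix.linftyOpNormedRing Matrix.linftyOpNormedAlgebra

lemma slope_exp {N : ℕ} (A : Matrix (Fin N) (Fin N) ℂ) (t : ℝ) :
    Filter.Tendsto (slope (fun s : ℝ => NormedSpace.exp (s • A)) t) (nhdsWithin t {t}ᶜ)
      (nhds (A * NormedSpace.exp (t • A))) :=
  hasDerivAt_iff_tendsto_slope.mp (hasDerivAt_exp_smul_const' A t)

lemma expc {N : ℕ} : Continuous (fun A : Matrix (Fin N) (Fin N) ℂ => NormedSpace.exp A) :=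
  NormedSpace.exp_continuous

end Linfty
end AuxK

attribute [local instance] Matrix.normedAddCommGroup Matrix.normedSpace

namespace AuxK

variable {N m : ℕ}

local notation "Mat" => Matrix (Fin N) (Fin N) ℂ

instance instENormedAddMonoidMat : ENormedAddMonoid Mat := NormedAddGroup.toENormedAddMonoid

instance instFrechetUrysohnSpaceMat : FrechetUrysohnSpace Mat :=
  inferInstanceAs (FrechetUrysohnSpace (Fin N → Fin N → ℂ))

instance instPseudoMetrizableSpaceMat : TopologicalSpace.PseudoMetrizableSpace Mat :=
  inferInstanceAs (TopologicalSpace.PseudoMetrizableSpace (Fin N → Fin N → ℂ))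

lemma hasDerivAt_expM (A : Mat) (t : ℝ) :
    HasDerivAt (fun s : ℝ => NormedSpace.exp (s • A)) (A * NormedSpace.exp (t • A)) t :=
  hasDerivAt_iff_tendsto_slope.mpr (slope_exp A t)

lemma cont_expSmul (A : Mat) : Continuous (fun s : ℝ => NormedSpace.exp (s • A)) :=
  continuous_iff_continuousAt.mpr fun t => (hasDerivAt_expM A t).continuousAt

lemma norm_mul_le' (A B : Mat) : ‖A * B‖ ≤ N * ‖A‖ * ‖B‖ := by
  have h0 : (0:ℝ) ≤ N * ‖A‖ * ‖B‖ := by positivity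
  rw [Matrix.norm_le_iff h0]
  intro i j
  calc ‖(A * B) i j‖ = ‖∑ k, A i k * B k j‖ := by rw [Matrix.mul_apply]
    _ ≤ ∑ k, ‖A i k * B k j‖ := norm_sum_le _ _
    _ ≤ ∑ _k : Fin N, ‖A‖ * ‖B‖ := by
        refine Finset.sum_le_sum fun k _ => ?_
        rw [norm_mul]
        exact mul_le_mul (Matrix.norm_entry_le_entrywise_sup_norm A)
          (Matrix.norm_entry_le_entrywise_sup_norm B) (norm_nonneg _) (norm_nonneg _)
    _ = N * ‖A‖ * ‖B‖ := by simp [Finset.sum_const, mul_assoc]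

lemma integrable_aux (Hd : Mat) (H : Fin m → Mat) {v : ℝ → Fin m → ℝ}
    (hv : Measurable v) {Cb T : ℝ} (hCb : ∀ s ∈ Set.Icc (0:ℝ) T, ‖v s‖ ≤ Cb)
    {U : ℝ → Mat} (hU : ContinuousOn U (Set.Icc 0 T))
    {a b : ℝ} (hab : a ≤ b) (h0 : 0 ≤ a) (hbT : b ≤ T) :
    IntervalIntegrable (fun s => (Hd + ∑ j, v s j • H j) * U s) volume a b := by
  have hsub : Set.Ioc a b ⊆ Set.Icc 0 T := fun x hx => ⟨h0.trans hx.1.le, hx.2.trans hbT⟩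
  rw [intervalIntegrable_iff_integrableOn_Ioc_of_le hab]
  have hφ : Continuous (fun w : Fin m → ℝ => Hd + ∑ j, w j • H j) :=
    continuous_const.add
      (continuous_finset_sum _ fun j _ => ((continuous_apply j).smul continuous_const))
  have hg : AEStronglyMeasurable (fun s => Hd + ∑ j, v s j • H j)
      (volume.restrict (Set.Ioc a b)) :=
    hφ.comp_aestronglyMeasurable hv.aestronglyMeasurable
  have hUm : AEStronglyMeasurable U (volume.restrict (Set.Ioc a b)) :=
    (hU.mono hsub).aestronglyMeasurable measurableSet_Ioc
  refine ⟨hg.mul hUm, ?_⟩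
  obtain ⟨CU, hCU⟩ := isCompact_Icc.exists_bound_of_continuousOn hU
  refine HasFiniteIntegral.of_bounded
    (C := N * (‖Hd‖ + ∑ j, max Cb 0 * ‖H j‖) * max CU 0) ?_
  refine (ae_restrict_iff' measurableSet_Ioc).2 (ae_of_all _ fun τ hτ => ?_)
  have hτT : τ ∈ Set.Icc (0:ℝ) T := hsub hτ
  have h1 : ‖Hd + ∑ j, v τ j • H j‖ ≤ ‖Hd‖ + ∑ j, max Cb 0 * ‖H j‖ := by
    refine (norm_add_le _ _).trans (add_le_add_right ?_ _)
    refine (norm_sum_le _ _).trans (Finset.sum_le_sum fun j _ => ?_)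
    rw [norm_smul]
    refine mul_le_mul_of_nonneg_right ?_ (norm_nonneg _)
    calc ‖v τ j‖ ≤ ‖v τ‖ := norm_le_pi_norm (v τ) j
      _ ≤ Cb := hCb τ hτT
      _ ≤ max Cb 0 := le_max_left _ _
  have h2 : ‖U τ‖ ≤ max CU 0 := (hCU τ hτT).trans (le_max_left _ _)
  calc ‖(Hd + ∑ j, v τ j • H j) * U τ‖
      ≤ N * ‖Hd + ∑ j, v τ j • H j‖ * ‖U τ‖ := norm_mul_le' _ _
    _ ≤ N * (‖Hd‖ + ∑ j, max Cb 0 * ‖H j‖) * max CU 0 := by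
        have hn1 : (0:ℝ) ≤ ‖Hd‖ + ∑ j, max Cb 0 * ‖H j‖ := by positivity
        gcongr

lemma traj_const (Hd : Mat) (H : Fin m → Mat) (v : Fin m → ℝ) (T : ℝ) :
    IsTrajectoryUnreduced Hd H T
      (fun s : ℝ => NormedSpace.exp (s • (Hd + ∑ j, v j • H j))) := by
  set A := Hd + ∑ j, v j • H j with hA
  refine ⟨fun _ => v, measurable_const, ⟨‖v‖, fun _ _ => le_rfl⟩,
    (cont_expSmul A).continuousOn, ?_⟩
  intro t _
  have hint : IntervalIntegrable (fun s : ℝ => A * NormedSpace.exp (s • A)) volume 0 t :=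
    (continuous_const.mul (cont_expSmul A)).intervalIntegrable _ _
  have hkey := intervalIntegral.integral_eq_sub_of_hasDerivAt
    (f := fun s : ℝ => NormedSpace.exp (s • A)) (f' := fun s => A * NormedSpace.exp (s • A))
    (fun s _ => hasDerivAt_expM A s) hint
  simp only [zero_smul, NormedSpace.exp_zero] at hkey
  show NormedSpace.exp (t • A) = NormedSpace.exp ((0:ℝ) • A)
      + ∫ s in (0:ℝ)..t, A * NormedSpace.exp (s • A)
  rw [hkey]
  simp only [zero_smul, NormedSpace.exp_zero]
  abel

lemma reach1_exp (Hd : Mat) (H : Fin m → Mat) (v : Fin m → ℝ) {τ t : ℝ}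
    (hτ : 0 ≤ τ) (hτt : τ ≤ t) :
    NormedSpace.exp (τ • (Hd + ∑ j, v j • H j)) ∈ reach1 Hd H 1 t :=
  ⟨τ, _, τ, traj_const Hd H v τ, by simp [NormedSpace.exp_zero], hτ, hτt, le_rfl, rfl⟩

lemma one_mem_reach1 (Hd : Mat) (H : Fin m → Mat) {t : ℝ} (ht : 0 ≤ t) :
    (1 : Mat) ∈ reach1 Hd H 1 t := by
  have := reach1_exp Hd H (fun _ => 0) (le_refl 0) ht
  simpa [NormedSpace.exp_zero] using this

lemma gen_mem_closure (Hd : Mat) (H : Fin m → Mat) (v : Fin m → ℝ) {ε : ℝ} (hε : 0 < ε) :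
    NormedSpace.exp (∑ j, v j • H j) ∈ closure (reach1 Hd H 1 ε) := by
  set B := ∑ j, v j • H j with hB
  have h0 : Filter.Tendsto (fun n : ℕ => 1 / ((n:ℝ) + 1)) Filter.atTop (nhds 0) :=
    tendsto_one_div_add_atTop_nhds_zero_nat
  have h1 : Filter.Tendsto (fun n : ℕ => (1 / ((n:ℝ) + 1)) • Hd + B) Filter.atTop
      (nhds B) := by
    have := (h0.smul_const Hd).add_const B
    simpa using this
  have h2 : Filter.Tendsto (fun n : ℕ => NormedSpace.exp ((1 / ((n:ℝ) + 1)) • Hd + B))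
      Filter.atTop (nhds (NormedSpace.exp B)) := (expc.tendsto B).comp h1
  refine mem_closure_of_tendsto h2 ?_
  have h3 : ∀ᶠ n : ℕ in Filter.atTop, 1 / ((n:ℝ) + 1) < ε :=
    h0.eventually (eventually_lt_nhds hε)
  filter_upwards [h3] with n hn
  have hτ : (0:ℝ) ≤ 1 / ((n:ℝ) + 1) := by positivity
  have hmem := reach1_exp Hd H (fun j => ((n:ℝ) + 1) * v j) hτ hn.le
  have harg : (1 / ((n:ℝ) + 1)) • (Hd + ∑ j, (((n:ℝ) + 1) * v j) • H j)
      = (1 / ((n:ℝ) + 1)) • Hd + B := by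
    rw [smul_add, hB, Finset.smul_sum]
    congr 1
    refine Finset.sum_congr rfl fun j _ => ?_
    rw [smul_smul]
    congr 1
    field_simp
  rwa [harg] at hmem

lemma reach1_mul {Hd : Mat} {H : Fin m → Mat} {x y : Mat} {t s : ℝ}
    (hx : x ∈ reach1 Hd H 1 t) (hy : y ∈ reach1 Hd H 1 s) :
    x * y ∈ reach1 Hd H 1 (t + s) := by
  obtain ⟨Tv, V, σ₀, ⟨vV, hvVm, ⟨Cv, hCv⟩, hVc, hVeq⟩, hV0, hσ0, hσt, hσTv, hxV⟩ := hx
  obtain ⟨Tw, W, s₀, ⟨vW, hvWm, ⟨Cw, hCw⟩, hWc, hWeq⟩, hW0, hs0, hss, hsTw, hyW⟩ := hy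
  set T := s₀ + σ₀ with hT
  set U : ℝ → Mat := fun τ => V (max τ s₀ - s₀) * W (min τ s₀) with hUdef
  set vc : ℝ → Fin m → ℝ := fun τ => if τ < s₀ then vW τ else vV (τ - s₀) with hvc
  have hs0T : s₀ ≤ T := by simp [hT, hσ0]
  -- U agrees with W for τ ≤ s₀, and with V(·-s₀)*y for τ ≥ s₀
  have hUeqW : ∀ τ : ℝ, τ ≤ s₀ → U τ = W τ := fun τ hτ => by
    simp [hUdef, max_eq_right hτ, min_eq_left hτ, hV0]
  have hUeqV : ∀ τ : ℝ, s₀ ≤ τ → U τ = V (τ - s₀) * y := fun τ hτ => by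
    simp [hUdef, max_eq_left hτ, min_eq_right hτ, ← hyW]
  -- measurability of the concatenated control
  have hvcm : Measurable vc := by
    refine Measurable.ite (measurableSet_Iio (a := s₀)) hvWm ?_
    exact hvVm.comp (measurable_id.sub measurable_const)
  -- bound for the concatenated control
  have hvcB : ∀ τ ∈ Set.Icc (0:ℝ) T, ‖vc τ‖ ≤ max Cw Cv := by
    intro τ hτ
    by_cases hcase : τ < s₀
    · have : ‖vW τ‖ ≤ Cw := hCw τ ⟨hτ.1, le_trans hcase.le hsTw⟩
      simpa [hvc, hcase] using this.trans (le_max_left _ _)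
    · push_neg at hcase
      have h1 : (0:ℝ) ≤ τ - s₀ := by linarith
      have h2 : τ - s₀ ≤ Tv := by
        have := hτ.2; rw [hT] at this; linarith [hσTv]
      have : ‖vV (τ - s₀)‖ ≤ Cv := hCv _ ⟨h1, h2⟩
      simpa [hvc, not_lt.2 hcase] using this.trans (le_max_right _ _)
  -- continuity of U on [0, T]
  have hUc : ContinuousOn U (Set.Icc 0 T) := by
    have hmap1 : Set.MapsTo (fun τ : ℝ => max τ s₀ - s₀) (Set.Icc 0 T) (Set.Icc 0 Tv) := by
      intro τ hτ
      constructor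
      · simp [le_max_right]
      · have : max τ s₀ ≤ T := max_le hτ.2 hs0T
        have : max τ s₀ - s₀ ≤ σ₀ := by rw [hT] at this; linarith
        exact this.trans hσTv
    have hmap2 : Set.MapsTo (fun τ : ℝ => min τ s₀) (Set.Icc 0 T) (Set.Icc 0 Tw) := by
      intro τ hτ
      exact ⟨le_min hτ.1 hs0, (min_le_right _ _).trans hsTw⟩
    have hc1 : ContinuousOn (fun τ : ℝ => V (max τ s₀ - s₀)) (Set.Icc 0 T) :=
      hVc.comp ((continuous_id.max continuous_const).sub continuous_const).continuousOn hmap1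
    have hc2 : ContinuousOn (fun τ : ℝ => W (min τ s₀)) (Set.Icc 0 T) :=
      hWc.comp (continuous_id.min continuous_const).continuousOn hmap2
    exact hc1.mul hc2
  -- the integrand
  set Fc : ℝ → Mat := fun τ => (Hd + ∑ j, vc τ j • H j) * U τ with hFc
  -- ae fact : a.e. point is not s₀
  have hae_ne : ∀ᵐ τ : ℝ, τ ≠ s₀ := by
    refine MeasureTheory.ae_iff.2 ?_
    simpa using Real.volume_singleton (x := s₀)
  -- Claim A : for 0 ≤ t1 ≤ s₀, ∫_0^t1 Fc = W t1 - 1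
  have claimA : ∀ t1 : ℝ, 0 ≤ t1 → t1 ≤ s₀ → (∫ τ in (0:ℝ)..t1, Fc τ) = W t1 - 1 := by
    intro t1 h01 h1s
    have hcong : (∫ τ in (0:ℝ)..t1, Fc τ)
        = ∫ τ in (0:ℝ)..t1, (Hd + ∑ j, vW τ j • H j) * W τ := by
      refine intervalIntegral.integral_congr_ae ?_
      filter_upwards [hae_ne] with τ hne hmem
      rw [Set.uIoc_of_le h01] at hmem
      have hlt : τ < s₀ := lt_of_le_of_ne (hmem.2.trans h1s) hne
      rw [hFc, hvc]
      simp only [if_pos hlt]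
      rw [hUeqW τ hlt.le]
    have hW1 := hWeq t1 ⟨h01, h1s.trans hsTw⟩
    rw [hW0] at hW1
    rw [hcong, hW1]
    abel
  refine ⟨T, U, T, ⟨vc, hvcm, ⟨max Cw Cv, hvcB⟩, hUc, ?_⟩, ?_, by positivity, by linarith, le_rfl, ?_⟩
  · -- integral identity
    intro τt hτt
    have hU0 : U 0 = 1 := by rw [hUeqW 0 hs0, hW0]
    rcases le_or_gt τt s₀ with hle | hgt
    · rw [hU0, hUeqW τt hle, claimA τt hτt.1 hle]
      abel
    · -- split the integral at s₀
      have hint1 : IntervalIntegrable Fc volume 0 s₀ :=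
        integrable_aux Hd H hvcm hvcB hUc hs0 le_rfl hs0T
      have hint2 : IntervalIntegrable Fc volume s₀ τt :=
        integrable_aux Hd H hvcm hvcB hUc hgt.le hs0 hτt.2
      have hsplit : (∫ τ in (0:ℝ)..s₀, Fc τ) + (∫ τ in s₀..τt, Fc τ)
          = ∫ τ in (0:ℝ)..τt, Fc τ :=
        intervalIntegral.integral_add_adjacent_intervals hint1 hint2
      have hpart1 : (∫ τ in (0:ℝ)..s₀, Fc τ) = y - 1 := by
        rw [claimA s₀ hs0 le_rfl, hyW]
      -- second part
      set FV : ℝ → Mat := fun σ => ((Hd + ∑ j, vV σ j • H j) * V σ) * y with hFV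
      have hcong2 : (∫ τ in s₀..τt, Fc τ) = ∫ τ in s₀..τt, FV (τ - s₀) := by
        refine intervalIntegral.integral_congr_ae (ae_of_all _ fun τ hmem => ?_)
        rw [Set.uIoc_of_le hgt.le] at hmem
        have hτs : s₀ < τ := hmem.1
        rw [hFc, hvc, hFV]
        simp only [if_neg (not_lt.2 hτs.le)]
        rw [hUeqV τ hτs.le, mul_assoc]
      have hshift : (∫ τ in s₀..τt, FV (τ - s₀)) = ∫ σ in (0:ℝ)..(τt - s₀), FV σ := by
        rw [intervalIntegral.integral_comp_sub_right (f := FV) s₀, sub_self]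
      have hintV : IntervalIntegrable (fun σ => (Hd + ∑ j, vV σ j • H j) * V σ)
          volume 0 (τt - s₀) := by
        refine integrable_aux Hd H hvVm hCv hVc (by linarith) le_rfl ?_
        have := hτt.2; rw [hT] at this
        linarith [hσTv]
      have hpull : (∫ σ in (0:ℝ)..(τt - s₀), FV σ)
          = (∫ σ in (0:ℝ)..(τt - s₀), (Hd + ∑ j, vV σ j • H j) * V σ) * y := by
        have hL := (LinearMap.toContinuousLinearMap
          (LinearMap.mulRight ℝ (y : Mat))).intervalIntegral_comp_comm hintV
          (a := 0) (b := τt - s₀)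
        simp only [hFV]
        exact hL
      have hVid := hVeq (τt - s₀) ⟨by linarith, by
        have := hτt.2; rw [hT] at this; linarith [hσTv]⟩
      rw [hV0] at hVid
      have hpart2 : (∫ τ in s₀..τt, Fc τ) = V (τt - s₀) * y - y := by
        rw [hcong2, hshift, hpull, ← sub_eq_iff_eq_add'.2 hVid, sub_mul, one_mul]
      rw [← hsplit, hpart1, hpart2, hU0, hUeqV τt hgt.le]
      abel
  · -- U 0 = 1
    rw [hUeqW 0 hs0, hW0]
  · -- x * y = U T
    have hTs : s₀ ≤ T := hs0T
    rw [hUeqV T hTs, hT, add_sub_cancel_left, hxV]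

lemma reach1_mono {Hd : Mat} {H : Fin m → Mat} {x : Mat} {t t' : ℝ} (h : t ≤ t') :
    reach1 Hd H x t ⊆ reach1 Hd H x t' := by
  rintro y ⟨T, U, s, h1, h2, h3, h4, h5, h6⟩
  exact ⟨T, U, s, h1, h2, h3, h4.trans h, h5, h6⟩

lemma closure_reach1_mul {Hd : Mat} {H : Fin m → Mat} {a b : Mat} {t s : ℝ}
    (ha : a ∈ closure (reach1 Hd H 1 t)) (hb : b ∈ closure (reach1 Hd H 1 s)) :
    a * b ∈ closure (reach1 Hd H 1 (t + s)) := by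
  rw [mem_closure_iff_seq_limit] at ha hb ⊢
  obtain ⟨u, hu, hul⟩ := ha
  obtain ⟨w, hw, hwl⟩ := hb
  exact ⟨fun n => u n * w n, fun n => reach1_mul (hu n) (hw n), hul.mul hwl⟩

lemma submonoid_subset_closure_reach1 (Hd : Mat) (H : Fin m → Mat) :
    ∀ g ∈ Submonoid.closure
      {g : Mat | ∃ v : Fin m → ℝ, g = NormedSpace.exp (∑ j, v j • H j)},
      ∀ ε : ℝ, 0 < ε → g ∈ closure (reach1 Hd H 1 ε) := by
  intro g hg
  induction hg using Submonoid.closure_induction with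
  | mem x hx =>
      obtain ⟨v, rfl⟩ := hx
      exact fun ε hε => gen_mem_closure Hd H v hε
  | one =>
      exact fun ε hε => subset_closure (one_mem_reach1 Hd H hε.le)
  | mul x y hx hy ihx ihy =>
      intro ε hε
      have h2 : (0:ℝ) < ε / 2 := by linarith
      have := closure_reach1_mul (ihx (ε/2) h2) (ihy (ε/2) h2)
      rwa [add_halves] at this

end AuxK

/-- **`K` is approximately reachable in zero time.**
`K ⊆ S₁(1,0)`; consequently, if `z ∈ S₁(1,t)` for some `t ≥ 0`, then `z·k ∈ S₁(1,t)`
for every `k ∈ K`. -/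
theorem K_subset_approxReach1_zero {N m : ℕ} (hN : 1 ≤ N) (hm : 1 ≤ m)
    (Hd : Matrix (Fin N) (Fin N) ℂ) (hHd : Hdᴴ = -Hd)
    (H : Fin m → Matrix (Fin N) (Fin N) ℂ) (hH : ∀ j, (H j)ᴴ = -H j)
    (K : Set (Matrix (Fin N) (Fin N) ℂ))
    (hKU : K ⊆ (Matrix.unitaryGroup (Fin N) ℂ : Set (Matrix (Fin N) (Fin N) ℂ)))
    (hK1 : (1 : Matrix (Fin N) (Fin N) ℂ) ∈ K)
    (hKmul : ∀ a ∈ K, ∀ b ∈ K, a * b ∈ K)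
    (hKinv : ∀ k ∈ K, k⁻¹ ∈ K)
    (hKcomp : IsCompact K)
    (hKgen : K = closure (Submonoid.closure
      {g : Matrix (Fin N) (Fin N) ℂ |
        ∃ v : Fin m → ℝ, g = NormedSpace.exp (∑ j, v j • H j)} :
          Set (Matrix (Fin N) (Fin N) ℂ))) :
    K ⊆ approxReach1 Hd H 1 0 ∧
      ∀ t : ℝ, 0 ≤ t → ∀ z ∈ approxReach1 Hd H 1 t, ∀ k ∈ K,
        z * k ∈ approxReach1 Hd H 1 t := by
  have hSub : ∀ ε : ℝ, 0 < ε → K ⊆ closure (reach1 Hd H 1 ε) := by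
    intro ε hε
    rw [hKgen]
    have h1 : (Submonoid.closure
        {g : Matrix (Fin N) (Fin N) ℂ |
          ∃ v : Fin m → ℝ, g = NormedSpace.exp (∑ j, v j • H j)} :
            Set (Matrix (Fin N) (Fin N) ℂ)) ⊆ closure (reach1 Hd H 1 ε) :=
      fun g hg => AuxK.submonoid_subset_closure_reach1 Hd H g hg ε hε
    calc closure (Submonoid.closure
        {g : Matrix (Fin N) (Fin N) ℂ |
          ∃ v : Fin m → ℝ, g = NormedSpace.exp (∑ j, v j • H j)} :
            Set (Matrix (Fin N) (Fin N) ℂ))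
        ⊆ closure (closure (reach1 Hd H 1 ε)) := closure_mono h1
      _ = closure (reach1 Hd H 1 ε) := closure_closure
  have hPart1 : K ⊆ approxReach1 Hd H 1 0 := fun k hk =>
    Set.mem_iInter₂.2 fun s hs => hSub s hs hk
  refine ⟨hPart1, ?_⟩
  intro t ht z hz k hk
  refine Set.mem_iInter₂.2 fun s hs => ?_
  have hs' : t < s := hs
  have hz1 : z ∈ closure (reach1 Hd H 1 ((t + s) / 2)) :=
    Set.mem_iInter₂.1 hz _ (show t < (t + s) / 2 by linarith)
  have hk1 : k ∈ closure (reach1 Hd H 1 ((s - t) / 2)) := hSub _ (by linarith) hk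
  have hmul := AuxK.closure_reach1_mul hz1 hk1
  have harith : (t + s) / 2 + (s - t) / 2 = s := by ring
  rwa [harith] at hmul
end
end

section
/- The matrix U is unitary, and conjugation by U, X ↦ U·X·U⁻¹, is a real Lie algebra isomorphism from 𝔨₂ onto so(4); in particular U·𝔨₂·U⁻¹ = so(4). (Hence the subalgebras su(2)⊗su(2) and so(4) of su(4) are conjugate, and SU(4)/(SU(2)⊗SU(2)) is equivariantly identified with SU(4)/SO(4).) -/
open Matrix Complex

/-- The six generators of `𝔨₂ = su(2) ⊗ su(2) ⊆ su(4)`: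
`I_x⊗1, 1⊗I_x, I_y⊗1, 1⊗I_y, I_z⊗1, 1⊗I_z` written out as `4 × 4` matrices. -/
def kTwoGenerators : Set (Matrix (Fin 4) (Fin 4) ℂ) :=
  { !![0, 0, 1, 0; 0, 0, 0, 1; -1, 0, 0, 0; 0, -1, 0, 0],
    !![0, 1, 0, 0; -1, 0, 0, 0; 0, 0, 0, 1; 0, 0, -1, 0],
    !![0, 0, I, 0; 0, 0, 0, I; I, 0, 0, 0; 0, I, 0, 0],
    !![0, I, 0, 0; I, 0, 0, 0; 0, 0, 0, I; 0, 0, I, 0],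
    !![I, 0, 0, 0; 0, I, 0, 0; 0, 0, -I, 0; 0, 0, 0, -I],
    !![I, 0, 0, 0; 0, -I, 0, 0; 0, 0, I, 0; 0, 0, 0, -I] }

/-- The Lie algebra `𝔨₂`, the real span of the six generators above. -/
noncomputable def kTwo : Submodule ℝ (Matrix (Fin 4) (Fin 4) ℂ) :=
  Submodule.span ℝ kTwoGenerators

/-- The Lie algebra `so(4)` of real skew-symmetric matrices inside `su(4)`. -/
def soFour : Set (Matrix (Fin 4) (Fin 4) ℂ) :=
  {X | Xᴴ = -X ∧ X.trace = 0 ∧ Xᵀ = -X}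

/-- The unitary matrix `U` conjugating `𝔨₂` onto `so(4)`. -/
noncomputable def conjU : Matrix (Fin 4) (Fin 4) ℂ :=
  ((Real.sqrt 2 : ℂ))⁻¹ •
    !![1, 0, 0, 1; 0, 1, -1, 0; I, 0, 0, -I; 0, I, I, 0]

/-! ### Auxiliary definitions and lemmas -/

def Amat : Matrix (Fin 4) (Fin 4) ℂ := !![1, 0, 0, 1; 0, 1, -1, 0; I, 0, 0, -I; 0, I, I, 0]
def Bmat : Matrix (Fin 4) (Fin 4) ℂ := !![1, 0, -I, 0; 0, 1, 0, -I; 0, -1, 0, -I; 1, 0, I, 0]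

def M1 : Matrix (Fin 4) (Fin 4) ℂ := !![0,-1,0,0; 1,0,0,0; 0,0,0,1; 0,0,-1,0]
def M2 : Matrix (Fin 4) (Fin 4) ℂ := !![0,1,0,0; -1,0,0,0; 0,0,0,1; 0,0,-1,0]
def M3 : Matrix (Fin 4) (Fin 4) ℂ := !![0,0,0,1; 0,0,-1,0; 0,1,0,0; -1,0,0,0]
def M4 : Matrix (Fin 4) (Fin 4) ℂ := !![0,0,0,1; 0,0,1,0; 0,-1,0,0; -1,0,0,0]
def M5 : Matrix (Fin 4) (Fin 4) ℂ := !![0,0,1,0; 0,0,0,1; -1,0,0,0; 0,-1,0,0]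
def M6 : Matrix (Fin 4) (Fin 4) ℂ := !![0,0,1,0; 0,0,0,-1; -1,0,0,0; 0,1,0,0]

lemma hAB : Amat * Bmat = (2:ℂ) • 1 := by
  ext i j; fin_cases i <;> fin_cases j <;>
    simp [Amat, Bmat, Matrix.mul_apply, Fin.sum_univ_four] <;> ring_nf <;>
    simp [Complex.I_sq] <;> ring

lemma hBA : Bmat * Amat = (2:ℂ) • 1 := by
  ext i j; fin_cases i <;> fin_cases j <;>
    simp [Amat, Bmat, Matrix.mul_apply, Fin.sum_univ_four] <;> ring_nf <;>
    simp [Complex.I_sq] <;> ring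

lemma hAH : Amatᴴ = Bmat := by
  ext i j; fin_cases i <;> fin_cases j <;> simp [Amat, Bmat, conjTranspose_apply]

lemma conjU_eq : conjU = ((Real.sqrt 2 : ℂ))⁻¹ • Amat := rfl

lemma conjUH : conjUᴴ = ((Real.sqrt 2 : ℂ))⁻¹ • Bmat := by
  rw [conjU_eq, conjTranspose_smul, hAH]
  congr 1
  simp

lemma hc2 : ((Real.sqrt 2 : ℂ))⁻¹ * ((Real.sqrt 2 : ℂ))⁻¹ = (2:ℂ)⁻¹ := by
  rw [← mul_inv, ← Complex.ofReal_mul, Real.mul_self_sqrt (by norm_num)]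
  norm_num

lemma hfac (X : Matrix (Fin 4) (Fin 4) ℂ) :
    conjU * X * conjUᴴ = (2:ℂ)⁻¹ • (Amat * X * Bmat) := by
  rw [conjUH, conjU_eq, Matrix.smul_mul, Matrix.smul_mul, Matrix.mul_smul, smul_smul, hc2]

lemma hUU : conjU * conjUᴴ = 1 := by
  have := hfac 1
  rw [Matrix.mul_one] at this
  rw [this, Matrix.mul_one, hAB, smul_smul]
  norm_num

lemma hUhU : conjUᴴ * conjU = 1 := by
  rw [conjUH, conjU_eq, Matrix.smul_mul, Matrix.mul_smul, smul_smul, hc2, hBA, smul_smul]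
  norm_num

lemma hinv : conjU⁻¹ = conjUᴴ := Matrix.inv_eq_right_inv hUU

/-- the conjugation map as a real-linear map -/
noncomputable def Lconj : Matrix (Fin 4) (Fin 4) ℂ →ₗ[ℝ] Matrix (Fin 4) (Fin 4) ℂ where
  toFun X := conjU * X * conjUᴴ
  map_add' X Y := by
    show conjU * (X + Y) * conjUᴴ = conjU * X * conjUᴴ + conjU * Y * conjUᴴ
    rw [Matrix.mul_add, Matrix.add_mul]
  map_smul' r X := by
    show conjU * (r • X) * conjUᴴ = r • (conjU * X * conjUᴴ)
    rw [Matrix.mul_smul, Matrix.smul_mul]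

@[simp] lemma Lconj_apply (X : Matrix (Fin 4) (Fin 4) ℂ) :
    Lconj X = conjU * X * conjUᴴ := rfl

/-- so(4) as a real submodule -/
noncomputable def soFourSub : Submodule ℝ (Matrix (Fin 4) (Fin 4) ℂ) where
  carrier := soFour
  add_mem' := by
    rintro X Y ⟨h1, h2, h3⟩ ⟨k1, k2, k3⟩
    refine ⟨?_, ?_, ?_⟩
    · rw [conjTranspose_add, h1, k1, neg_add]
    · rw [trace_add, h2, k2, add_zero]
    · rw [transpose_add, h3, k3, neg_add]
  zero_mem' := by
    refine ⟨?_, ?_, ?_⟩ <;> simp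
  smul_mem' := by
    rintro r X ⟨h1, h2, h3⟩
    refine ⟨?_, ?_, ?_⟩
    · rw [conjTranspose_smul, h1]; simp
    · rw [trace_smul, h2, smul_zero]
    · rw [transpose_smul, h3, smul_neg]

lemma conj_gen1 : Lconj !![0, 0, 1, 0; 0, 0, 0, 1; -1, 0, 0, 0; 0, -1, 0, 0] = M1 := by
  rw [Lconj_apply, hfac]
  have e1 : Amat * !![0, 0, 1, 0; 0, 0, 0, 1; -1, 0, 0, 0; 0, -1, 0, 0] = !![0, -1, 1, 0; 1, 0, 0, 1; 0, I, I, 0; -I, 0, 0, I] := by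
    ext i j; fin_cases i <;> fin_cases j <;>
      simp [Amat, Matrix.mul_apply, Fin.sum_univ_four, Matrix.vecHead, Matrix.vecTail] <;>
      ring_nf <;> simp [Complex.I_sq] <;> ring
  have e2 : !![0, -1, 1, 0; 1, 0, 0, 1; 0, I, I, 0; -I, 0, 0, I] * Bmat = (2:ℂ) • M1 := by
    ext i j; fin_cases i <;> fin_cases j <;>
      simp [Bmat, M1, Matrix.mul_apply, Fin.sum_univ_four, Matrix.smul_apply,
        Matrix.vecHead, Matrix.vecTail] <;> ring_nf <;> simp [Complex.I_sq] <;> ring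
  rw [e1, e2, smul_smul]; norm_num

lemma conj_gen2 : Lconj !![0, 1, 0, 0; -1, 0, 0, 0; 0, 0, 0, 1; 0, 0, -1, 0] = M2 := by
  rw [Lconj_apply, hfac]
  have e1 : Amat * !![0, 1, 0, 0; -1, 0, 0, 0; 0, 0, 0, 1; 0, 0, -1, 0] = !![0, 1, -1, 0; -1, 0, 0, -1; 0, I, I, 0; -I, 0, 0, I] := by
    ext i j; fin_cases i <;> fin_cases j <;>
      simp [Amat, Matrix.mul_apply, Fin.sum_univ_four, Matrix.vecHead, Matrix.vecTail] <;>
      ring_nf <;> simp [Complex.I_sq] <;> ring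
  have e2 : !![0, 1, -1, 0; -1, 0, 0, -1; 0, I, I, 0; -I, 0, 0, I] * Bmat = (2:ℂ) • M2 := by
    ext i j; fin_cases i <;> fin_cases j <;>
      simp [Bmat, M2, Matrix.mul_apply, Fin.sum_univ_four, Matrix.smul_apply,
        Matrix.vecHead, Matrix.vecTail] <;> ring_nf <;> simp [Complex.I_sq] <;> ring
  rw [e1, e2, smul_smul]; norm_num

lemma conj_gen3 : Lconj !![0, 0, I, 0; 0, 0, 0, I; I, 0, 0, 0; 0, I, 0, 0] = M3 := by
  rw [Lconj_apply, hfac]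
  have e1 : Amat * !![0, 0, I, 0; 0, 0, 0, I; I, 0, 0, 0; 0, I, 0, 0] = !![0, I, I, 0; -I, 0, 0, I; 0, 1, -1, 0; -1, 0, 0, -1] := by
    ext i j; fin_cases i <;> fin_cases j <;>
      simp [Amat, Matrix.mul_apply, Fin.sum_univ_four, Matrix.vecHead, Matrix.vecTail] <;>
      ring_nf <;> simp [Complex.I_sq] <;> ring
  have e2 : !![0, I, I, 0; -I, 0, 0, I; 0, 1, -1, 0; -1, 0, 0, -1] * Bmat = (2:ℂ) • M3 := by
    ext i j; fin_cases i <;> fin_cases j <;>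
      simp [Bmat, M3, Matrix.mul_apply, Fin.sum_univ_four, Matrix.smul_apply,
        Matrix.vecHead, Matrix.vecTail] <;> ring_nf <;> simp [Complex.I_sq] <;> ring
  rw [e1, e2, smul_smul]; norm_num

lemma conj_gen4 : Lconj !![0, I, 0, 0; I, 0, 0, 0; 0, 0, 0, I; 0, 0, I, 0] = M4 := by
  rw [Lconj_apply, hfac]
  have e1 : Amat * !![0, I, 0, 0; I, 0, 0, 0; 0, 0, 0, I; 0, 0, I, 0] = !![0, I, I, 0; I, 0, 0, -I; 0, -1, 1, 0; -1, 0, 0, -1] := by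
    ext i j; fin_cases i <;> fin_cases j <;>
      simp [Amat, Matrix.mul_apply, Fin.sum_univ_four, Matrix.vecHead, Matrix.vecTail] <;>
      ring_nf <;> simp [Complex.I_sq] <;> ring
  have e2 : !![0, I, I, 0; I, 0, 0, -I; 0, -1, 1, 0; -1, 0, 0, -1] * Bmat = (2:ℂ) • M4 := by
    ext i j; fin_cases i <;> fin_cases j <;>
      simp [Bmat, M4, Matrix.mul_apply, Fin.sum_univ_four, Matrix.smul_apply,
        Matrix.vecHead, Matrix.vecTail] <;> ring_nf <;> simp [Complex.I_sq] <;> ring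
  rw [e1, e2, smul_smul]; norm_num

lemma conj_gen5 : Lconj !![I, 0, 0, 0; 0, I, 0, 0; 0, 0, -I, 0; 0, 0, 0, -I] = M5 := by
  rw [Lconj_apply, hfac]
  have e1 : Amat * !![I, 0, 0, 0; 0, I, 0, 0; 0, 0, -I, 0; 0, 0, 0, -I] = !![I, 0, 0, -I; 0, I, I, 0; -1, 0, 0, -1; 0, -1, 1, 0] := by
    ext i j; fin_cases i <;> fin_cases j <;>
      simp [Amat, Matrix.mul_apply, Fin.sum_univ_four, Matrix.vecHead, Matrix.vecTail] <;>
      ring_nf <;> simp [Complex.I_sq] <;> ring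
  have e2 : !![I, 0, 0, -I; 0, I, I, 0; -1, 0, 0, -1; 0, -1, 1, 0] * Bmat = (2:ℂ) • M5 := by
    ext i j; fin_cases i <;> fin_cases j <;>
      simp [Bmat, M5, Matrix.mul_apply, Fin.sum_univ_four, Matrix.smul_apply,
        Matrix.vecHead, Matrix.vecTail] <;> ring_nf <;> simp [Complex.I_sq] <;> ring
  rw [e1, e2, smul_smul]; norm_num

lemma conj_gen6 : Lconj !![I, 0, 0, 0; 0, -I, 0, 0; 0, 0, I, 0; 0, 0, 0, -I] = M6 := by
  rw [Lconj_apply, hfac]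
  have e1 : Amat * !![I, 0, 0, 0; 0, -I, 0, 0; 0, 0, I, 0; 0, 0, 0, -I] = !![I, 0, 0, -I; 0, -I, -I, 0; -1, 0, 0, -1; 0, 1, -1, 0] := by
    ext i j; fin_cases i <;> fin_cases j <;>
      simp [Amat, Matrix.mul_apply, Fin.sum_univ_four, Matrix.vecHead, Matrix.vecTail] <;>
      ring_nf <;> simp [Complex.I_sq] <;> ring
  have e2 : !![I, 0, 0, -I; 0, -I, -I, 0; -1, 0, 0, -1; 0, 1, -1, 0] * Bmat = (2:ℂ) • M6 := by
    ext i j; fin_cases i <;> fin_cases j <;>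
      simp [Bmat, M6, Matrix.mul_apply, Fin.sum_univ_four, Matrix.smul_apply,
        Matrix.vecHead, Matrix.vecTail] <;> ring_nf <;> simp [Complex.I_sq] <;> ring
  rw [e1, e2, smul_smul]; norm_num

lemma M1_mem : M1 ∈ soFour := by
  refine ⟨?_, ?_, ?_⟩
  · ext i j; fin_cases i <;> fin_cases j <;>
      simp [M1, conjTranspose_apply, Matrix.neg_apply, Matrix.vecHead, Matrix.vecTail]
  · simp [M1, Matrix.trace, Fin.sum_univ_four, Matrix.diag, Matrix.vecHead, Matrix.vecTail]
  · ext i j; fin_cases i <;> fin_cases j <;>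
      simp [M1, transpose_apply, Matrix.neg_apply, Matrix.vecHead, Matrix.vecTail]

lemma M2_mem : M2 ∈ soFour := by
  refine ⟨?_, ?_, ?_⟩
  · ext i j; fin_cases i <;> fin_cases j <;>
      simp [M2, conjTranspose_apply, Matrix.neg_apply, Matrix.vecHead, Matrix.vecTail]
  · simp [M2, Matrix.trace, Fin.sum_univ_four, Matrix.diag, Matrix.vecHead, Matrix.vecTail]
  · ext i j; fin_cases i <;> fin_cases j <;>
      simp [M2, transpose_apply, Matrix.neg_apply, Matrix.vecHead, Matrix.vecTail]

lemma M3_mem : M3 ∈ soFour := by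
  refine ⟨?_, ?_, ?_⟩
  · ext i j; fin_cases i <;> fin_cases j <;>
      simp [M3, conjTranspose_apply, Matrix.neg_apply, Matrix.vecHead, Matrix.vecTail]
  · simp [M3, Matrix.trace, Fin.sum_univ_four, Matrix.diag, Matrix.vecHead, Matrix.vecTail]
  · ext i j; fin_cases i <;> fin_cases j <;>
      simp [M3, transpose_apply, Matrix.neg_apply, Matrix.vecHead, Matrix.vecTail]

lemma M4_mem : M4 ∈ soFour := by
  refine ⟨?_, ?_, ?_⟩
  · ext i j; fin_cases i <;> fin_cases j <;>
      simp [M4, conjTranspose_apply, Matrix.neg_apply, Matrix.vecHead, Matrix.vecTail]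
  · simp [M4, Matrix.trace, Fin.sum_univ_four, Matrix.diag, Matrix.vecHead, Matrix.vecTail]
  · ext i j; fin_cases i <;> fin_cases j <;>
      simp [M4, transpose_apply, Matrix.neg_apply, Matrix.vecHead, Matrix.vecTail]

lemma M5_mem : M5 ∈ soFour := by
  refine ⟨?_, ?_, ?_⟩
  · ext i j; fin_cases i <;> fin_cases j <;>
      simp [M5, conjTranspose_apply, Matrix.neg_apply, Matrix.vecHead, Matrix.vecTail]
  · simp [M5, Matrix.trace, Fin.sum_univ_four, Matrix.diag, Matrix.vecHead, Matrix.vecTail]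
  · ext i j; fin_cases i <;> fin_cases j <;>
      simp [M5, transpose_apply, Matrix.neg_apply, Matrix.vecHead, Matrix.vecTail]

lemma M6_mem : M6 ∈ soFour := by
  refine ⟨?_, ?_, ?_⟩
  · ext i j; fin_cases i <;> fin_cases j <;>
      simp [M6, conjTranspose_apply, Matrix.neg_apply, Matrix.vecHead, Matrix.vecTail]
  · simp [M6, Matrix.trace, Fin.sum_univ_four, Matrix.diag, Matrix.vecHead, Matrix.vecTail]
  · ext i j; fin_cases i <;> fin_cases j <;>
      simp [M6, transpose_apply, Matrix.neg_apply, Matrix.vecHead, Matrix.vecTail]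

set_option maxHeartbeats 2000000 in
lemma span_M_eq : (Submodule.span ℝ {M1, M2, M3, M4, M5, M6} :
    Submodule ℝ (Matrix (Fin 4) (Fin 4) ℂ)) = soFourSub := by
  have h1 := M1_mem; have h2 := M2_mem; have h3 := M3_mem
  have h4 := M4_mem; have h5 := M5_mem; have h6 := M6_mem
  apply le_antisymm
  · rw [Submodule.span_le]
    rintro X (rfl | rfl | rfl | rfl | rfl | rfl) <;> assumption
  · intro X hX
    obtain ⟨hH, htr, hT⟩ := hX
    have hskew : ∀ i j, X j i = -X i j := by
      intro i j
      have := congrFun (congrFun hT i) j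
      simpa [transpose_apply] using this
    have hre : ∀ i j, X i j = ((X i j).re : ℂ) := by
      intro i j
      have h1 := congrFun (congrFun hH i) j
      simp only [conjTranspose_apply, Matrix.neg_apply] at h1
      have h2 := hskew i j
      rw [h2, star_neg] at h1
      have : (starRingEnd ℂ) (X i j) = X i j := by
        have := neg_injective h1
        simpa using this
      exact (Complex.conj_eq_iff_re.mp this).symm
    set a := (X 0 1).re
    set b := (X 0 2).re
    set c := (X 0 3).re
    set d := (X 1 2).re
    set e := (X 1 3).re
    set f := (X 2 3).re
    have d0 : X 0 0 = 0 := by have := hskew 0 0; linear_combination this/2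
    have d1 : X 1 1 = 0 := by have := hskew 1 1; linear_combination this/2
    have d2 : X 2 2 = 0 := by have := hskew 2 2; linear_combination this/2
    have d3 : X 3 3 = 0 := by have := hskew 3 3; linear_combination this/2
    have hXeq : X = ((f - a)/2) • M1 + ((a + f)/2) • M2 + ((c - d)/2) • M3 +
        ((c + d)/2) • M4 + ((b + e)/2) • M5 + ((b - e)/2) • M6 := by
      ext i j
      fin_cases i <;> fin_cases j <;>
        simp [M1, M2, M3, M4, M5, M6, Matrix.vecHead, Matrix.vecTail] <;>
        first
        | (rw [d0])
        | (rw [d1])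
        | (rw [d2])
        | (rw [d3])
        | (rw [hre 0 1]; push_cast; ring)
        | (rw [hre 0 2]; push_cast; ring)
        | (rw [hre 0 3]; push_cast; ring)
        | (rw [hre 1 2]; push_cast; ring)
        | (rw [hre 1 3]; push_cast; ring)
        | (rw [hre 2 3]; push_cast; ring)
        | (rw [hskew 0 1, hre 0 1]; push_cast; ring)
        | (rw [hskew 0 2, hre 0 2]; push_cast; ring)
        | (rw [hskew 0 3, hre 0 3]; push_cast; ring)
        | (rw [hskew 1 2, hre 1 2]; push_cast; ring)
        | (rw [hskew 1 3, hre 1 3]; push_cast; ring)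
        | (rw [hskew 2 3, hre 2 3]; push_cast; ring)
    rw [hXeq]
    have mem : ∀ m ∈ ({M1, M2, M3, M4, M5, M6} : Set (Matrix (Fin 4) (Fin 4) ℂ)),
        m ∈ Submodule.span ℝ {M1, M2, M3, M4, M5, M6} := fun m hm => Submodule.subset_span hm
    refine Submodule.add_mem _ (Submodule.add_mem _ (Submodule.add_mem _ (Submodule.add_mem _
      (Submodule.add_mem _ ?_ ?_) ?_) ?_) ?_) ?_ <;>
      apply Submodule.smul_mem <;> apply mem <;> simp [Set.mem_insert_iff]

/-- **Conjugation of `su(2)⊗su(2)` onto `so(4)`.**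
The matrix `U = (1/√2)·[[1,0,0,1],[0,1,−1,0],[i,0,0,−i],[0,i,i,0]]` is unitary, conjugation
`X ↦ U·X·U⁻¹` preserves the commutator bracket, and it maps `𝔨₂` bijectively onto `so(4)`. -/
theorem kTwo_conj_soFour :
    conjU ∈ Matrix.unitaryGroup (Fin 4) ℂ ∧
    (∀ X Y : Matrix (Fin 4) (Fin 4) ℂ,
      conjU * (X * Y - Y * X) * conjU⁻¹ =
        (conjU * X * conjU⁻¹) * (conjU * Y * conjU⁻¹)
          - (conjU * Y * conjU⁻¹) * (conjU * X * conjU⁻¹)) ∧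
    Set.InjOn (fun X => conjU * X * conjU⁻¹) (kTwo : Set (Matrix (Fin 4) (Fin 4) ℂ)) ∧
    (fun X => conjU * X * conjU⁻¹) '' (kTwo : Set (Matrix (Fin 4) (Fin 4) ℂ)) = soFour := by
  have key : ∀ X Y : Matrix (Fin 4) (Fin 4) ℂ,
      (conjU * X * conjUᴴ) * (conjU * Y * conjUᴴ) = conjU * (X * Y) * conjUᴴ := by
    intro X Y
    calc (conjU * X * conjUᴴ) * (conjU * Y * conjUᴴ)
        = conjU * X * ((conjUᴴ * conjU) * (Y * conjUᴴ)) := by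
          simp only [Matrix.mul_assoc]
      _ = conjU * (X * Y) * conjUᴴ := by
          rw [hUhU, Matrix.one_mul]; simp only [Matrix.mul_assoc]
  have cancel : ∀ X : Matrix (Fin 4) (Fin 4) ℂ, conjUᴴ * (conjU * X * conjUᴴ) * conjU = X := by
    intro X
    simp only [← Matrix.mul_assoc]
    rw [hUhU, Matrix.one_mul, Matrix.mul_assoc, hUhU, Matrix.mul_one]
  refine ⟨?_, ?_, ?_, ?_⟩
  · rw [Matrix.mem_unitaryGroup_iff, Matrix.star_eq_conjTranspose]
    exact hUU
  · intro X Y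
    rw [hinv, key, key]
    simp only [Matrix.mul_sub, Matrix.sub_mul]
  · intro X _ Y _ h
    simp only [hinv] at h
    have := congrArg (fun M => conjUᴴ * M * conjU) h
    simpa only [cancel] using this
  · rw [hinv]
    have him : (fun X => conjU * X * conjUᴴ) '' (kTwo : Set (Matrix (Fin 4) (Fin 4) ℂ))
        = (Submodule.map Lconj kTwo : Set (Matrix (Fin 4) (Fin 4) ℂ)) := by
      rw [Submodule.map_coe]; rfl
    rw [him, kTwo, Submodule.map_span]
    have himg : Lconj '' kTwoGenerators = {M1, M2, M3, M4, M5, M6} := by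
      rw [kTwoGenerators]
      simp only [Set.image_insert_eq, Set.image_singleton,
        conj_gen1, conj_gen2, conj_gen3, conj_gen4, conj_gen5, conj_gen6]
    rw [himg, span_M_eq]
    rfl
end
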